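/- Let x₀ > 0, t₀ = 1/(2x₀), and g(t) = 1/√(t − t² x₀) for t ∈ (0, 1/x₀). Then g^{(2N)}(t₀)/g(t₀) = ((2N)!)²/(N!)² · x₀^{2N}. -/

import Mathlib

open scoped Nat

/-- Normalized central binomial coefficient. -/
noncomputable def auxDD (n : ℕ) : ℝ := (Nat.centralBinom n : ℝ) / 4 ^ n

lemma auxDD_nonneg (n : ℕ) : 0 ≤ auxDD n :=
  div_nonneg (Nat.cast_nonneg _) (by positivity)

lemma auxDD_zero : auxDD 0 = 1 := by
  simp [auxDD, Nat.centralBinom_zero]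

lemma auxDD_le_one (n : ℕ) : auxDD n ≤ 1 := by
  rw [auxDD, div_le_one (by positivity)]
  have h1 : (2 * n).choose n ≤ ∑ i ∈ Finset.range (2 * n + 1), (2 * n).choose i :=
    Finset.single_le_sum (f := fun i => (2 * n).choose i) (fun i _ => Nat.zero_le _)
      (Finset.mem_range.2 (by omega))
  have h2 : Nat.centralBinom n ≤ 4 ^ n := by
    calc Nat.centralBinom n = (2 * n).choose n := rfl
      _ ≤ 2 ^ (2 * n) := by rw [← Nat.sum_range_choose (2 * n)]; exact h1
      _ = 4 ^ n := by rw [pow_mul]; norm_num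
  exact_mod_cast h2

lemma auxDD_rec (n : ℕ) : 2 * ((n : ℝ) + 1) * auxDD (n + 1) = (2 * n + 1) * auxDD n := by
  have h : ((n : ℝ) + 1) * (Nat.centralBinom (n + 1) : ℝ)
      = 2 * (2 * n + 1) * (Nat.centralBinom n : ℝ) := by
    exact_mod_cast Nat.succ_mul_centralBinom_succ n
  rw [auxDD, auxDD, pow_succ, ← mul_div_assoc, ← mul_div_assoc,
    div_eq_div_iff (by positivity) (by positivity)]
  linear_combination 2 * (4 : ℝ) ^ n * h

lemma auxDD_summable {z : ℝ} (hz : |z| < 1) : Summable fun n => auxDD n * z ^ n := by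
  refine Summable.of_norm (Summable.of_nonneg_of_le (fun n => norm_nonneg _) (fun n => ?_)
    (summable_geometric_of_lt_one (abs_nonneg z) hz))
  rw [norm_mul, norm_pow, Real.norm_eq_abs, Real.norm_eq_abs, abs_of_nonneg (auxDD_nonneg n)]
  exact mul_le_of_le_one_left (pow_nonneg (abs_nonneg z) n) (auxDD_le_one n)

/-- The central binomial power series sums to `1/√(1-w)` on `[0,1)`. -/
lemma auxDD_hasSum {w : ℝ} (h0 : 0 ≤ w) (h1 : w < 1) :
    HasSum (fun n => auxDD n * w ^ n) (1 / Real.sqrt (1 - w)) := by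
  set S : ℝ → ℝ := fun z => ∑' n, auxDD n * z ^ n with hS
  set r : ℝ := (1 + w) / 2 with hr
  have hr0 : 0 < r := by rw [hr]; linarith
  have hr1 : r < 1 := by rw [hr]; linarith
  have hwr : w < r := by rw [hr]; linarith
  set t : Set ℝ := Set.Ioo (-r) r with htdef
  have ht : IsOpen t := isOpen_Ioo
  have h't : IsPreconnected t := isPreconnected_Ioo
  -- summable bound for the derivative series
  have hu : Summable (fun n : ℕ => (n : ℝ) * r ^ (n - 1)) := by
    have key : Summable (fun n : ℕ => ((n : ℝ) + 1) * r ^ n) := by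
      have ha := summable_pow_mul_geometric_of_norm_lt_one 1
        (r := r) (by rwa [Real.norm_eq_abs, abs_of_pos hr0])
      have hb := summable_geometric_of_lt_one hr0.le hr1
      have := ha.add hb
      refine this.congr fun n => ?_
      -- (cast already normal)
      ring
    refine (summable_nat_add_iff 1).mp ?_
    refine key.congr fun n => ?_
    simp only [Nat.add_sub_cancel]
    push_cast
    ring
  have hg : ∀ (n : ℕ) (y : ℝ), y ∈ t →
      HasDerivAt (fun z : ℝ => auxDD n * z ^ n) (auxDD n * ((n : ℝ) * y ^ (n - 1))) y :=
    fun n y _ => (hasDerivAt_pow n y).const_mul (auxDD n)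
  have hg' : ∀ (n : ℕ) (y : ℝ), y ∈ t →
      ‖auxDD n * ((n : ℝ) * y ^ (n - 1))‖ ≤ (n : ℝ) * r ^ (n - 1) := by
    intro n y hy
    have hyr : |y| ≤ r := le_of_lt (abs_lt.2 ⟨hy.1, hy.2⟩)
    rw [norm_mul, norm_mul, norm_pow, Real.norm_eq_abs, Real.norm_eq_abs, Real.norm_eq_abs,
      abs_of_nonneg (auxDD_nonneg n), Nat.abs_cast]
    calc auxDD n * ((n : ℝ) * |y| ^ (n - 1)) ≤ 1 * ((n : ℝ) * r ^ (n - 1)) := by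
          apply mul_le_mul (auxDD_le_one n) _ (by positivity) one_pos.le
          exact mul_le_mul_of_nonneg_left
            (pow_le_pow_left₀ (abs_nonneg y) hyr _) (Nat.cast_nonneg n)
      _ = (n : ℝ) * r ^ (n - 1) := one_mul _
  have h0t : (0 : ℝ) ∈ t := ⟨by linarith, hr0⟩
  have hg0 : Summable fun n => auxDD n * (0 : ℝ) ^ n := auxDD_summable (by simp)
  have hderiv : ∀ y ∈ t, HasDerivAt S (∑' n, auxDD n * ((n : ℝ) * y ^ (n - 1))) y :=
    fun y hy => hasDerivAt_tsum_of_isPreconnected hu ht h't hg hg' h0t hg0 hy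
  have hsum' : ∀ y ∈ t, Summable fun n => auxDD n * ((n : ℝ) * y ^ (n - 1)) :=
    fun y hy => Summable.of_norm_bounded hu (fun n => hg' n y hy)
  -- the functional identity S y = 2 (1-y) S' y
  have hid : ∀ y ∈ t, S y = 2 * (1 - y) * (∑' n, auxDD n * ((n : ℝ) * y ^ (n - 1))) := by
    intro y hy
    set σ : ℝ := ∑' n, auxDD n * ((n : ℝ) * y ^ (n - 1)) with hσ
    have hT : HasSum (fun n => auxDD n * ((n : ℝ) * y ^ (n - 1))) σ := (hsum' y hy).hasSum
    have h2 : HasSum (fun n => 2 * (auxDD n * ((n : ℝ) * y ^ (n - 1)))) (2 * σ) := hT.mul_left 2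
    have h2shift : HasSum (fun n : ℕ => 2 * (auxDD (n + 1) * (((n : ℝ) + 1) * y ^ n)))
        (2 * σ - 0) := by
      have := (hasSum_nat_add_iff' (f := fun n => 2 * (auxDD n * ((n : ℝ) * y ^ (n - 1)))) 1).mpr h2
      simp only [Finset.range_one, Finset.sum_singleton, Nat.cast_zero, zero_mul, mul_zero,
        sub_zero, Nat.add_sub_cancel, Nat.cast_add, Nat.cast_one] at this ⊢
      simpa using this
    have hy2 : HasSum (fun n => (2 * y) * (auxDD n * ((n : ℝ) * y ^ (n - 1)))) ((2 * y) * σ) :=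
      hT.mul_left (2 * y)
    have hsub := h2shift.sub hy2
    have hterm : ∀ n : ℕ, 2 * (auxDD (n + 1) * (((n : ℝ) + 1) * y ^ n))
        - (2 * y) * (auxDD n * ((n : ℝ) * y ^ (n - 1))) = auxDD n * y ^ n := by
      intro n
      cases n with
      | zero =>
        have h := auxDD_rec 0
        rw [auxDD_zero] at h
        push_cast at h
        rw [auxDD_zero]
        push_cast
        ring_nf
        linarith
      | succ m =>
        have h := auxDD_rec (m + 1)
        simp only [Nat.add_sub_cancel]
        push_cast at h ⊢
        linear_combination y ^ (m + 1) * h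
    rw [funext hterm] at hsub
    have hSy : S y = 2 * σ - 0 - 2 * y * σ := hsub.tsum_eq
    rw [hSy]
    ring
  -- the function F = S² (1-z) is constant on [0, w]
  set F : ℝ → ℝ := fun z => S z ^ 2 * (1 - z) with hF
  have hFd : ∀ y ∈ t, HasDerivAt F 0 y := by
    intro y hy
    set σ : ℝ := ∑' n, auxDD n * ((n : ℝ) * y ^ (n - 1)) with hσ
    have hS' : HasDerivAt S σ y := hderiv y hy
    have h1 : HasDerivAt (fun z => S z ^ 2) (2 * S y ^ 1 * σ) y := by
      exact (hS'.pow 2).congr_deriv (by norm_num)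
    have h2 : HasDerivAt (fun z : ℝ => 1 - z) (-1) y := by
      simpa using (hasDerivAt_id y).const_sub 1
    have hmul := h1.mul h2
    refine hmul.congr_deriv ?_
    have hid' := hid y hy
    rw [← hσ] at hid'
    linear_combination (-(S y)) * hid'
  have hsubset : Set.Icc (0 : ℝ) w ⊆ t := by
    intro x hx
    exact ⟨by linarith [hx.1], lt_of_le_of_lt hx.2 hwr⟩
  have hcont : ContinuousOn F (Set.Icc 0 w) :=
    fun x hx => ((hFd x (hsubset hx)).continuousAt).continuousWithinAt
  have hFw : F w = F 0 :=
    constant_of_has_deriv_right_zero hcont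
      (fun x hx => (hFd x (hsubset ⟨hx.1, hx.2.le⟩)).hasDerivWithinAt)
      w (Set.right_mem_Icc.2 h0)
  have hS0 : S 0 = 1 := by
    rw [hS]
    simp only
    rw [tsum_eq_single 0 (fun n hn => by simp [zero_pow hn])]
    simp [auxDD_zero]
  have hF0 : F 0 = 1 := by rw [hF]; simp [hS0]
  have h1w : (0 : ℝ) < 1 - w := by linarith
  have hSw2 : S w ^ 2 = 1 / (1 - w) := by
    rw [eq_div_iff (by linarith)]
    rw [hF0] at hFw
    exact hFw
  have hSnn : 0 ≤ S w :=
    tsum_nonneg fun n => mul_nonneg (auxDD_nonneg n) (pow_nonneg h0 n)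
  have hSw : S w = 1 / Real.sqrt (1 - w) := by
    have hsq : Real.sqrt (S w ^ 2) = Real.sqrt (1 / (1 - w)) := by rw [hSw2]
    rw [Real.sqrt_sq hSnn] at hsq
    rw [hsq, one_div, Real.sqrt_inv, one_div]
  have hsumm : Summable fun n => auxDD n * w ^ n :=
    auxDD_summable (by rwa [abs_of_nonneg h0])
  have := hsumm.hasSum
  rwa [show (∑' n, auxDD n * w ^ n) = S w from rfl, hSw] at this

open FormalMultilinearSeries in
/-- For `g(t) = 1/√(t - t²x₀)` on `(0, 1/x₀)` and `t₀ = 1/(2x₀)`,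
`g^{(2N)}(t₀)/g(t₀) = ((2N)!)²/(N!)² · x₀^{2N}`. -/
theorem stmt7 (N : ℕ) (hN : 0 < N) (x₀ : ℝ) (hx₀ : 0 < x₀)
    (g : ℝ → ℝ) (hg : ∀ t, g t = 1 / Real.sqrt (t - t ^ 2 * x₀))
    (t₀ : ℝ) (ht₀ : t₀ = 1 / (2 * x₀)) :
    iteratedDerivWithin (2 * N) g (Set.Ioo 0 (1 / x₀)) t₀ / g t₀ =
      (Nat.factorial (2 * N) : ℝ) ^ 2 / (Nat.factorial N : ℝ) ^ 2 * x₀ ^ (2 * N) := by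
  have hsx : 0 < Real.sqrt x₀ := Real.sqrt_pos.2 hx₀
  have h4sqrt : Real.sqrt (4 * x₀) = 2 * Real.sqrt x₀ := by
    rw [show (4 : ℝ) * x₀ = (2 : ℝ) ^ 2 * x₀ by norm_num, Real.sqrt_mul (by positivity),
      Real.sqrt_sq (by norm_num)]
  set c : ℕ → ℝ := fun k =>
    if Even k then 2 * Real.sqrt x₀ * auxDD (k / 2) * (2 * x₀) ^ k else 0 with hc
  set rnn : NNReal := ⟨1 / (2 * x₀), by positivity⟩ with hrnn
  have hrr : (rnn : ℝ) = 1 / (2 * x₀) := rfl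
  have hps : HasFPowerSeriesOnBall g (ofScalars ℝ c) t₀ rnn := by
    constructor
    · -- radius bound
      apply FormalMultilinearSeries.le_radius_of_bound _ (2 * Real.sqrt x₀)
      intro n
      rw [ofScalars_norm, hrr]
      by_cases hn : Even n
      · rw [hc]
        simp only [if_pos hn]
        have hnn : (0 : ℝ) ≤ 2 * Real.sqrt x₀ * auxDD (n / 2) * (2 * x₀) ^ n :=
          mul_nonneg (mul_nonneg (by positivity) (auxDD_nonneg _)) (by positivity)
        rw [Real.norm_eq_abs, abs_of_nonneg hnn]
        have hone : (2 * x₀) ^ n * (1 / (2 * x₀)) ^ n = 1 := by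
          rw [← mul_pow, mul_one_div_cancel (by positivity), one_pow]
        calc 2 * Real.sqrt x₀ * auxDD (n / 2) * (2 * x₀) ^ n * (1 / (2 * x₀)) ^ n
            = 2 * Real.sqrt x₀ * auxDD (n / 2) * ((2 * x₀) ^ n * (1 / (2 * x₀)) ^ n) := by ring
          _ = 2 * Real.sqrt x₀ * auxDD (n / 2) := by rw [hone, mul_one]
          _ ≤ 2 * Real.sqrt x₀ * 1 :=
              mul_le_mul_of_nonneg_left (auxDD_le_one _) (by positivity)
          _ = 2 * Real.sqrt x₀ := mul_one _
      · rw [hc]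
        simp only [if_neg hn]
        simp
    · exact_mod_cast NNReal.coe_pos.1 (by rw [hrr]; positivity)
    · intro y hy
      rw [mem_emetric_ball_zero_iff, enorm_eq_nnnorm, ENNReal.coe_lt_coe, ← NNReal.coe_lt_coe, coe_nnnorm,
        Real.norm_eq_abs, hrr] at hy
      set w : ℝ := (2 * x₀ * y) ^ 2 with hw
      have hw0 : 0 ≤ w := sq_nonneg _
      have hw1 : w < 1 := by
        have h2 : |2 * x₀ * y| < 1 := by
          rw [abs_mul, abs_of_pos (by positivity : (0 : ℝ) < 2 * x₀)]
          calc 2 * x₀ * |y| < 2 * x₀ * (1 / (2 * x₀)) :=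
                mul_lt_mul_of_pos_left hy (by positivity)
            _ = 1 := by field_simp
        calc w = |2 * x₀ * y| ^ 2 := (sq_abs _).symm
          _ < 1 := by nlinarith [abs_nonneg (2 * x₀ * y)]
      have hsum := (auxDD_hasSum hw0 hw1).mul_left (2 * Real.sqrt x₀)
      have hval : g (t₀ + y) = 2 * Real.sqrt x₀ * (1 / Real.sqrt (1 - w)) := by
        rw [hg]
        have harg : (t₀ + y) - (t₀ + y) ^ 2 * x₀ = (1 - w) / (4 * x₀) := by
          rw [ht₀, hw]; field_simp; ring
        rw [harg, Real.sqrt_div (by linarith) _, h4sqrt, one_div_div, mul_one_div]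
      rw [hval]
      refine (Function.Injective.hasSum_iff
        (f := fun k => (ofScalars ℝ c k) fun _ => y)
        (fun a b hab => by dsimp at hab; omega : Function.Injective (fun n : ℕ => 2 * n)) ?_).1 ?_
      · intro k hk
        have hodd : ¬ Even k := by
          intro he
          obtain ⟨m, hm⟩ := he
          exact hk ⟨m, by dsimp; omega⟩
        show (ofScalars ℝ c k) (fun _ => y) = 0
        rw [ofScalars_apply_eq, hc]
        simp [if_neg hodd]
      · have hcomp : ((fun k => (ofScalars ℝ c k) fun _ => y) ∘ fun n : ℕ => 2 * n)
            = fun n => 2 * Real.sqrt x₀ * (auxDD n * w ^ n) := by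
          funext n
          have he : Even (2 * n) := ⟨n, by ring⟩
          have hdiv : (2 * n) / 2 = n := by omega
          simp only [Function.comp_apply]
          rw [ofScalars_apply_eq, smul_eq_mul, hc]
          simp only [if_pos he, hdiv, hw]
          rw [← pow_mul, mul_pow]
          ring
        rw [hcomp]
        exact hsum
  have hiter : iteratedDeriv (2 * N) g t₀ = ((2 * N).factorial : ℝ) * c (2 * N) := by
    have h := hps.factorial_smul (1 : ℝ) (2 * N)
    rw [iteratedDeriv_eq_iteratedFDeriv, ← h, ofScalars_apply_eq, one_pow, smul_eq_mul,
      mul_one, nsmul_eq_mul]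
  have ht₀mem : t₀ ∈ Set.Ioo (0 : ℝ) (1 / x₀) := by
    rw [ht₀]
    constructor
    · positivity
    · exact one_div_lt_one_div_of_lt hx₀ (by linarith)
  have hwithin : iteratedDerivWithin (2 * N) g (Set.Ioo 0 (1 / x₀)) t₀
      = iteratedDeriv (2 * N) g t₀ := by
    rw [iteratedDerivWithin_eq_iteratedFDerivWithin, iteratedDeriv_eq_iteratedFDeriv,
      iteratedFDerivWithin_of_isOpen _ isOpen_Ioo ht₀mem]
  have hgt₀ : g t₀ = 2 * Real.sqrt x₀ := by
    rw [hg, ht₀]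
    have harg : 1 / (2 * x₀) - (1 / (2 * x₀)) ^ 2 * x₀ = 1 / (4 * x₀) := by
      field_simp
      ring
    rw [harg, show (1 : ℝ) / (4 * x₀) = (4 * x₀)⁻¹ from one_div _, Real.sqrt_inv, one_div, inv_inv, h4sqrt]
  have hc2N : c (2 * N) = 2 * Real.sqrt x₀ * auxDD N * (2 * x₀) ^ (2 * N) := by
    rw [hc]
    have he : Even (2 * N) := ⟨N, by ring⟩
    have hdiv : (2 * N) / 2 = N := by omega
    simp only [if_pos he, hdiv]
  have hcb : (Nat.centralBinom N : ℝ) * ((N.factorial : ℝ) * (N.factorial : ℝ))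
      = ((2 * N).factorial : ℝ) := by
    have h2 := Nat.choose_mul_factorial_mul_factorial (show N ≤ 2 * N by omega)
    rw [show 2 * N - N = N by omega] at h2
    have h3 : Nat.centralBinom N * (N.factorial * N.factorial) = (2 * N).factorial := by
      rw [show Nat.centralBinom N = (2 * N).choose N from rfl, ← mul_assoc]
      exact h2
    exact_mod_cast h3
  rw [hwithin, hiter, hc2N, hgt₀, auxDD]
  have h4pow : ((2 : ℝ) * x₀) ^ (2 * N) = 4 ^ N * x₀ ^ (2 * N) := by
    rw [mul_pow, pow_mul]
    norm_num
  rw [h4pow]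
  have hf : (0 : ℝ) < (N.factorial : ℝ) := by positivity
  have h4N : (0 : ℝ) < (4 : ℝ) ^ N := by positivity
  field_simp
  linear_combination hcb
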